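/- Let a_max > 0, d > 0, T > 0, and let p : ℝ → ℝ be differentiable with derivative v, and v differentiable with derivative a satisfying |a(t)| ≤ a_max for all t ∈ [0,T]. Suppose p(0) = 0, p(T) = d, v(0) = 0 and v(T) = 0. Then T ≥ 2√(d/a_max). -/

import Mathlib

open Set

theorem rest_to_rest_time_lower_bound
    (amax d T : ℝ) (ha : 0 < amax) (hd : 0 < d) (hT : 0 < T)
    (p v a : ℝ → ℝ)
    (hp : ∀ t, HasDerivAt p (v t) t)
    (hv : ∀ t, HasDerivAt v (a t) t)
    (hab : ∀ t ∈ Set.Icc 0 T, |a t| ≤ amax)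
    (hp0 : p 0 = 0) (hpT : p T = d)
    (hv0 : v 0 = 0) (hvT : v T = 0) :
    2 * Real.sqrt (d / amax) ≤ T := by
  -- |v t| ≤ amax * t on [0,T]
  have hv1 : ∀ t ∈ Icc (0:ℝ) T, |v t| ≤ amax * t := by
    intro t ht
    have := norm_image_sub_le_of_norm_deriv_le_segment'
      (f := v) (f' := a) (a := 0) (b := T)
      (fun x hx => (hv x).hasDerivWithinAt)
      (fun x hx => hab x (Ico_subset_Icc_self hx)) t ht
    simpa [hv0, Real.norm_eq_abs] using this
  -- |v t| ≤ amax * (T - t) on [0,T]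
  have hv2 : ∀ t ∈ Icc (0:ℝ) T, |v t| ≤ amax * (T - t) := by
    intro t ht
    have := norm_image_sub_le_of_norm_deriv_le_segment'
      (f := v) (f' := a) (a := t) (b := T)
      (fun x hx => (hv x).hasDerivWithinAt)
      (fun x hx => hab x ⟨le_trans ht.1 hx.1, le_of_lt hx.2⟩) T
      ⟨ht.2, le_refl T⟩
    rw [hvT] at this
    simpa [Real.norm_eq_abs, abs_sub_comm] using this
  -- g t = amax * t^2 / 2 - p t is monotone on [0, T/2]
  set g : ℝ → ℝ := fun t => amax / 2 * t ^ 2 - p t with hg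
  have hg' : ∀ t, HasDerivAt g (amax * t - v t) t := by
    intro t
    have h1 : HasDerivAt (fun t : ℝ => amax / 2 * t ^ 2) (amax * t) t := by
      have := ((hasDerivAt_pow 2 t).const_mul (amax / 2))
      exact this.congr_deriv (by push_cast; ring)
    exact h1.sub (hp t)
  have hgd : ∀ t, deriv g t = amax * t - v t := fun t => (hg' t).deriv
  have hgmono : MonotoneOn g (Icc 0 (T / 2)) := by
    apply monotoneOn_of_deriv_nonneg (convex_Icc _ _)
      (fun t _ => (hg' t).continuousAt.continuousWithinAt)
      (fun t _ => ((hg' t).differentiableAt).differentiableWithinAt)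
    intro t htint
    rw [interior_Icc] at htint
    rw [hgd]
    have ht' : t ∈ Icc (0:ℝ) T := ⟨le_of_lt htint.1, le_trans (le_of_lt htint.2) (by linarith)⟩
    have := hv1 t ht'
    have := abs_le.mp this
    linarith [this.2]
  -- h t = p t + amax * (T - t)^2 / 2 is antitone on [T/2, T]
  set h : ℝ → ℝ := fun t => p t + amax / 2 * (T - t) ^ 2 with hh
  have hh' : ∀ t, HasDerivAt h (v t - amax * (T - t)) t := by
    intro t
    have h1 : HasDerivAt (fun t : ℝ => amax / 2 * (T - t) ^ 2) (-(amax * (T - t))) t := by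
      have hb : HasDerivAt (fun t : ℝ => T - t) (-1) t := by
        exact ((hasDerivAt_const t T).sub (hasDerivAt_id t)).congr_deriv (by ring)
      have := ((hb.pow 2).const_mul (amax / 2))
      exact this.congr_deriv (by push_cast; ring)
    exact ((hp t).add h1).congr_deriv (by ring)
  have hhd : ∀ t, deriv h t = v t - amax * (T - t) := fun t => (hh' t).deriv
  have hhanti : AntitoneOn h (Icc (T / 2) T) := by
    apply antitoneOn_of_deriv_nonpos (convex_Icc _ _)
      (fun t _ => (hh' t).continuousAt.continuousWithinAt)
      (fun t _ => ((hh' t).differentiableAt).differentiableWithinAt)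
    intro t htint
    rw [interior_Icc] at htint
    rw [hhd]
    have ht' : t ∈ Icc (0:ℝ) T := ⟨le_trans (by linarith) (le_of_lt htint.1), le_of_lt htint.2⟩
    have := abs_le.mp (hv2 t ht')
    linarith [this.2]
  -- combine
  have hhalf : (T / 2) ∈ Icc (0:ℝ) (T / 2) := ⟨by linarith, le_refl _⟩
  have h1 : g 0 ≤ g (T / 2) := hgmono ⟨le_refl _, by linarith⟩ hhalf (by linarith)
  have h2 : h T ≤ h (T / 2) := hhanti ⟨le_refl _, by linarith⟩ ⟨by linarith, le_refl _⟩ (by linarith)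
  simp only [hg, hh, hp0, hpT] at h1 h2
  have hkey : d ≤ amax * (T / 2) ^ 2 := by
    have : (T - T / 2) = T / 2 := by ring
    rw [this] at h2
    nlinarith [h1, h2]
  have hdiv : d / amax ≤ (T / 2) ^ 2 := by
    rw [div_le_iff₀ ha] at *
    nlinarith
  have := Real.sqrt_le_sqrt hdiv
  rw [Real.sqrt_sq (by linarith : (0:ℝ) ≤ T / 2)] at this
  linarith
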